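/- (Gibbs risk decomposition) Let ρ be a probability measure on a set H of voters with bounded measurable evaluations and let P be a probability measure on X × {-1,+1} with X-marginal D. Define the expected joint error e_P(ρ) = ∫_{X×Y} ∫_{H×H} (1/4)(1 − y·h(x))(1 − y·h'(x)) d(ρ⊗ρ)(h,h') dP(x,y) and the expected disagreement d_D(ρ) = ∫_X ∫_{H×H} (1/2)(1 − h(x)h'(x)) d(ρ⊗ρ)(h,h') dD(x). Then the Gibbs risk satisfies R_P(G_ρ) = (1/2) d_D(ρ) + e_P(ρ), where R_P(G_ρ) = (1/2)(1 − ∫_{X×Y} y·(∫_H h(x) dρ(h)) dP(x,y)). -/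

import Mathlib

open MeasureTheory

/-- Gibbs risk decomposition: `R_P(G_ρ) = (1/2) d_D(ρ) + e_P(ρ)`, where `e_P(ρ)` is
the expected joint error and `d_D(ρ)` the expected disagreement of two voters. -/
theorem gibbs_risk_decomposition
    {X H : Type*} [MeasurableSpace X] [MeasurableSpace H]
    (P : Measure (X × ℝ)) [IsProbabilityMeasure P]
    (D : Measure X) (hD : P.map Prod.fst = D)
    (ρ : Measure H) [IsProbabilityMeasure ρ]
    (f : H → X → ℝ)
    (hmeas : Measurable (fun p : H × X => f p.1 p.2))
    (hbound : ∀ h x, |f h x| ≤ 1)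
    (hY : ∀ᵐ p ∂P, p.2 = 1 ∨ p.2 = -1) :
    (1 / 2) * (1 - ∫ p, p.2 * ∫ h, f h p.1 ∂ρ ∂P) =
      (1 / 2) * (∫ x, ∫ q : H × H, (1 / 2) * (1 - f q.1 x * f q.2 x) ∂(ρ.prod ρ) ∂D) +
        ∫ p, ∫ q : H × H,
          (1 / 4) * (1 - p.2 * f q.1 p.1) * (1 - p.2 * f q.2 p.1) ∂(ρ.prod ρ) ∂P := by
  classical
  set M : X → ℝ := fun x => ∫ h, f h x ∂ρ with hMdef
  set g : X → ℝ := fun x => ∫ q : H × H, f q.1 x * f q.2 x ∂(ρ.prod ρ) with hgdef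
  -- measurability pieces
  have hmeas1 : Measurable (fun z : X × H => f z.2 z.1) :=
    hmeas.comp measurable_swap
  have hM_meas : Measurable M := by
    have := StronglyMeasurable.integral_prod_right' (ν := ρ) hmeas1.stronglyMeasurable
    exact this.measurable
  have hprod_meas : Measurable (fun z : X × (H × H) => f z.2.1 z.1 * f z.2.2 z.1) := by
    have h1 : Measurable (fun z : X × (H × H) => f z.2.1 z.1) :=
      hmeas.comp (measurable_snd.fst.prodMk measurable_fst)
    have h2 : Measurable (fun z : X × (H × H) => f z.2.2 z.1) :=
      hmeas.comp (measurable_snd.snd.prodMk measurable_fst)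
    exact h1.mul h2
  have hg_meas : Measurable g := by
    have := StronglyMeasurable.integral_prod_right' (ν := ρ.prod ρ) hprod_meas.stronglyMeasurable
    exact this.measurable
  -- integrability at fixed x
  have hint1 : ∀ x : X, Integrable (fun h => f h x) ρ := fun x =>
    Integrable.mono' (integrable_const 1)
      ((hmeas.comp (measurable_id.prodMk measurable_const)).aestronglyMeasurable)
      (Filter.Eventually.of_forall fun h => by
        simpa [Real.norm_eq_abs] using hbound h x)
  have hmeasq1 : ∀ x : X, Measurable (fun q : H × H => f q.1 x) := fun x =>
    hmeas.comp (measurable_fst.prodMk measurable_const)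
  have hmeasq2 : ∀ x : X, Measurable (fun q : H × H => f q.2 x) := fun x =>
    hmeas.comp (measurable_snd.prodMk measurable_const)
  have hintq1 : ∀ x : X, Integrable (fun q : H × H => f q.1 x) (ρ.prod ρ) := fun x =>
    Integrable.mono' (integrable_const 1) (hmeasq1 x).aestronglyMeasurable
      (Filter.Eventually.of_forall fun q => by
        simpa [Real.norm_eq_abs] using hbound q.1 x)
  have hintq2 : ∀ x : X, Integrable (fun q : H × H => f q.2 x) (ρ.prod ρ) := fun x =>
    Integrable.mono' (integrable_const 1) (hmeasq2 x).aestronglyMeasurable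
      (Filter.Eventually.of_forall fun q => by
        simpa [Real.norm_eq_abs] using hbound q.2 x)
  have hintq : ∀ x : X, Integrable (fun q : H × H => f q.1 x * f q.2 x) (ρ.prod ρ) := fun x =>
    Integrable.mono' (integrable_const 1) ((hmeasq1 x).mul (hmeasq2 x)).aestronglyMeasurable
      (Filter.Eventually.of_forall fun q => by
        have := mul_le_one₀ (hbound q.1 x) (abs_nonneg _) (hbound q.2 x)
        simpa [Real.norm_eq_abs, abs_mul] using this)
  -- projections integrate to M
  have hproj1 : ∀ x : X, (∫ q : H × H, f q.1 x ∂(ρ.prod ρ)) = M x := by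
    intro x
    rw [integral_prod _ (hintq1 x)]
    simp [hMdef]
  have hproj2 : ∀ x : X, (∫ q : H × H, f q.2 x ∂(ρ.prod ρ)) = M x := by
    intro x
    rw [integral_prod _ (hintq2 x)]
    simp [hMdef]
  -- bound on M and g
  have hM_bound : ∀ x, |M x| ≤ 1 := by
    intro x
    have h1 : |M x| ≤ ∫ h, |f h x| ∂ρ := by
      simpa [Real.norm_eq_abs] using norm_integral_le_integral_norm (fun h => f h x) (μ := ρ)
    have h2 : (∫ h, |f h x| ∂ρ) ≤ ∫ _h, (1:ℝ) ∂ρ :=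
      integral_mono ((hint1 x).abs) (integrable_const 1) (fun h => hbound h x)
    simpa using h1.trans h2
  have hg_bound : ∀ x, |g x| ≤ 1 := by
    intro x
    have h1 : |g x| ≤ ∫ q : H × H, |f q.1 x| * |f q.2 x| ∂(ρ.prod ρ) := by
      simpa [Real.norm_eq_abs] using
        norm_integral_le_integral_norm (fun q : H × H => f q.1 x * f q.2 x) (μ := ρ.prod ρ)
    have h2 : (∫ q : H × H, |f q.1 x| * |f q.2 x| ∂(ρ.prod ρ)) ≤ ∫ _q : H × H, (1:ℝ) ∂(ρ.prod ρ) :=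
      integral_mono (by simpa [abs_mul] using (hintq x).abs) (integrable_const 1) (fun q =>
        mul_le_one₀ (hbound q.1 x) (abs_nonneg _) (hbound q.2 x))
    simpa using h1.trans h2
  -- inner disagreement integral
  have hdis : ∀ x : X,
      (∫ q : H × H, (1 / 2) * (1 - f q.1 x * f q.2 x) ∂(ρ.prod ρ)) = (1/2) * (1 - g x) := by
    intro x
    rw [integral_const_mul, integral_sub (integrable_const 1) (hintq x)]
    simp [hgdef]
  -- inner joint error integral, given y² = 1
  have hjoint : ∀ x : X, ∀ y : ℝ, y = 1 ∨ y = -1 →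
      (∫ q : H × H, (1 / 4) * (1 - y * f q.1 x) * (1 - y * f q.2 x) ∂(ρ.prod ρ))
        = (1/4) * (1 - 2 * y * M x + g x) := by
    intro x y hy
    have hyy : y * y = 1 := by rcases hy with h | h <;> simp [h]
    have hcongr : ∀ q : H × H,
        (1 / 4 : ℝ) * (1 - y * f q.1 x) * (1 - y * f q.2 x)
          = 1/4 - (1/4) * y * f q.1 x - (1/4) * y * f q.2 x
            + (1/4) * (f q.1 x * f q.2 x) := by
      intro q
      have : y * f q.1 x * (y * f q.2 x) = f q.1 x * f q.2 x := by
        calc y * f q.1 x * (y * f q.2 x) = (y * y) * (f q.1 x * f q.2 x) := by ring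
        _ = f q.1 x * f q.2 x := by rw [hyy]; ring
      nlinarith [this]
    rw [integral_congr_ae (Filter.Eventually.of_forall hcongr)]
    have i0 : Integrable (fun _ : H × H => (1/4 : ℝ)) (ρ.prod ρ) := integrable_const _
    have i1 : Integrable (fun q : H × H => (1/4 : ℝ) * y * f q.1 x) (ρ.prod ρ) := by
      have := ((hintq1 x).const_mul ((1/4 : ℝ) * y))
      simpa [mul_assoc] using this
    have i2 : Integrable (fun q : H × H => (1/4 : ℝ) * y * f q.2 x) (ρ.prod ρ) := by
      have := ((hintq2 x).const_mul ((1/4 : ℝ) * y))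
      simpa [mul_assoc] using this
    have i3 : Integrable (fun q : H × H => (1/4 : ℝ) * (f q.1 x * f q.2 x)) (ρ.prod ρ) :=
      ((hintq x).const_mul _)
    have i01 : Integrable (fun q : H × H => (1/4 : ℝ) - (1/4) * y * f q.1 x) (ρ.prod ρ) :=
      i0.sub i1
    have i012 : Integrable
        (fun q : H × H => (1/4 : ℝ) - (1/4) * y * f q.1 x - (1/4) * y * f q.2 x) (ρ.prod ρ) :=
      i01.sub i2
    rw [integral_add i012 i3, integral_sub i01 i2, integral_sub i0 i1]
    have j1 : (∫ q : H × H, (1/4 : ℝ) * y * f q.1 x ∂(ρ.prod ρ)) = (1/4) * y * M x := by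
      rw [show (fun q : H × H => (1/4 : ℝ) * y * f q.1 x)
          = fun q : H × H => ((1/4 : ℝ) * y) * f q.1 x from funext fun q => by ring]
      rw [integral_const_mul, hproj1 x]
    have j2 : (∫ q : H × H, (1/4 : ℝ) * y * f q.2 x ∂(ρ.prod ρ)) = (1/4) * y * M x := by
      rw [show (fun q : H × H => (1/4 : ℝ) * y * f q.2 x)
          = fun q : H × H => ((1/4 : ℝ) * y) * f q.2 x from funext fun q => by ring]
      rw [integral_const_mul, hproj2 x]
    have j3 : (∫ q : H × H, (1/4 : ℝ) * (f q.1 x * f q.2 x) ∂(ρ.prod ρ)) = (1/4) * g x := by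
      rw [integral_const_mul]
    rw [j1, j2, j3]
    simp only [integral_const, Measure.real, measure_univ, ENNReal.toReal_one, smul_eq_mul, one_mul]
    ring
  -- rewrite outer integrals
  have hDrw : (∫ x, ∫ q : H × H, (1 / 2) * (1 - f q.1 x * f q.2 x) ∂(ρ.prod ρ) ∂D)
      = ∫ p, (1/2) * (1 - g p.1) ∂P := by
    have h1 : (∫ x, ∫ q : H × H, (1 / 2) * (1 - f q.1 x * f q.2 x) ∂(ρ.prod ρ) ∂D)
        = ∫ x, (1/2) * (1 - g x) ∂D :=
      integral_congr_ae (Filter.Eventually.of_forall hdis)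
    rw [h1, ← hD, integral_map measurable_fst.aemeasurable (f := fun x => (1/2 : ℝ) * (1 - g x))
      (((measurable_const.sub hg_meas).const_mul _)).aestronglyMeasurable]
  have hPrw : (∫ p, ∫ q : H × H,
        (1 / 4) * (1 - p.2 * f q.1 p.1) * (1 - p.2 * f q.2 p.1) ∂(ρ.prod ρ) ∂P)
      = ∫ p, (1/4) * (1 - 2 * p.2 * M p.1 + g p.1) ∂P := by
    refine integral_congr_ae ?_
    filter_upwards [hY] with p hp
    exact hjoint p.1 p.2 hp
  -- integrability over P
  have hIntMP : Integrable (fun p : X × ℝ => p.2 * M p.1) P := by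
    refine Integrable.mono' (integrable_const 1)
      ((measurable_snd.mul (hM_meas.comp measurable_fst)).aestronglyMeasurable) ?_
    filter_upwards [hY] with p hp
    have h2 : |p.2| = 1 := by rcases hp with h | h <;> simp [h]
    rw [Real.norm_eq_abs, abs_mul, h2, one_mul]
    exact hM_bound p.1
  have hIntgP : Integrable (fun p : X × ℝ => g p.1) P := by
    refine Integrable.mono' (integrable_const 1)
      ((hg_meas.comp measurable_fst).aestronglyMeasurable) ?_
    exact Filter.Eventually.of_forall fun p => by
      simpa [Real.norm_eq_abs] using hg_bound p.1
  rw [hDrw, hPrw]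
  have e1 : (∫ p, (1/2 : ℝ) * (1 - g p.1) ∂P) = (1/2) * (1 - ∫ p, g p.1 ∂P) := by
    rw [integral_const_mul, integral_sub (integrable_const 1) hIntgP]
    simp
  have e2 : (∫ p, (1/4 : ℝ) * (1 - 2 * p.2 * M p.1 + g p.1) ∂P)
      = (1/4) * (1 - 2 * (∫ p, p.2 * M p.1 ∂P) + ∫ p, g p.1 ∂P) := by
    have hInt2 : Integrable (fun p : X × ℝ => 2 * p.2 * M p.1) P := by
      have := hIntMP.const_mul 2
      simpa [mul_assoc] using this
    have i0 : Integrable (fun _ : X × ℝ => (1:ℝ)) P := integrable_const 1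
    have i01 : Integrable (fun p : X × ℝ => (1:ℝ) - 2 * p.2 * M p.1) P := i0.sub hInt2
    rw [integral_const_mul, integral_add i01 hIntgP, integral_sub i0 hInt2]
    have h2 : (∫ p, 2 * p.2 * M p.1 ∂P) = 2 * ∫ p, p.2 * M p.1 ∂P := by
      rw [show (fun p : X × ℝ => 2 * p.2 * M p.1)
          = fun p : X × ℝ => 2 * (p.2 * M p.1) from funext fun p => by ring]
      rw [integral_const_mul]
    simp [h2]
  rw [e1, e2]
  simp only [hMdef]
  ring
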